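/- Let S be an ordered additive commutative monoid (addition is monotone in each variable) in which x ≤ x + y holds for all x, y ∈ S. Suppose there are integers m ≥ 2 and n ≥ 1 such that for all x, y ∈ S, n·x ≤ m·y implies x ≤ y. Then for every x ∈ S and every integer k ≥ 1: if k·x is properly infinite (i.e., 2·(k·x) ≤ k·x), then x is properly infinite (i.e., 2·x ≤ x). -/

import Mathlib

private lemma absorb_aux {S : Type*} [AddCommMonoid S] [PartialOrder S]
    [IsOrderedAddMonoid S] {z : S}
    (h2 : 2 • z ≤ z) : ∀ a : ℕ, 1 ≤ a → a • z ≤ z := by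
  intro a ha
  induction a with
  | zero => omega
  | succ a ih =>
    rcases Nat.eq_or_lt_of_le ha with h1 | h1
    · have : a = 0 := by omega
      subst this
      simp
    · have ha' : 1 ≤ a := by omega
      have := ih ha'
      calc (a + 1) • z = z + a • z := by rw [add_comm, add_nsmul, one_smul]
        _ ≤ z + z := add_le_add_right this z
        _ = 2 • z := (two_nsmul z).symm
        _ ≤ z := h2

private lemma main_aux {S : Type*} [AddCommMonoid S] [PartialOrder S]
    [IsOrderedAddMonoid S]
    (hle : ∀ x y : S, x ≤ x + y)
    (m n : ℕ) (hm : 2 ≤ m) (hn : 1 ≤ n)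
    (hcomp : ∀ x y : S, n • x ≤ m • y → x ≤ y)
    (x : S) : ∀ k : ℕ, 1 ≤ k → 2 • (k • x) ≤ k • x → 2 • x ≤ x := by
  intro k
  induction k using Nat.strong_induction_on with
  | _ k ih =>
    intro hk hki
    rcases Nat.eq_or_lt_of_le hk with h1 | h2
    · rw [← h1, one_smul] at hki; exact hki
    · set j := (k + 1) / 2 with hjdef
      have hj1 : 1 ≤ j := by omega
      have hjk : j < k := by omega
      have hkmj : k ≤ m * j := by
        have : k ≤ 2 * j := by omega
        calc k ≤ 2 * j := this
          _ ≤ m * j := Nat.mul_le_mul_right j hm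
      have haa : ∀ a : ℕ, 1 ≤ a → a • (k • x) ≤ k • x := absorb_aux hki
      have hxkx : x ≤ k • x := by
        have h := hle x ((k - 1) • x)
        calc x ≤ x + (k - 1) • x := h
          _ = (1 + (k - 1)) • x := by rw [add_nsmul, one_smul]
          _ = k • x := by congr 1; omega
      have hle_mul : ∀ a b : ℕ, a ≤ b → a • x ≤ b • x := by
        intro a b hab
        calc a • x ≤ a • x + (b - a) • x := hle _ _
          _ = (a + (b - a)) • x := (add_nsmul x a (b - a)).symm
          _ = b • x := by congr 1; omega
      have step : k • x ≤ j • x := by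
        apply hcomp
        calc n • (k • x) ≤ k • x := haa n hn
          _ ≤ (j * m) • x := hle_mul k (j * m) (Nat.mul_comm m j ▸ hkmj)
          _ = m • (j • x) := mul_nsmul x j m
      have hji : 2 • (j • x) ≤ j • x := by
        calc 2 • (j • x) = (j * 2) • x := (mul_nsmul x j 2).symm
          _ ≤ (j * 2) • (k • x) := nsmul_le_nsmul_right hxkx _
          _ ≤ k • x := haa (j * 2) (by omega)
          _ ≤ j • x := step
      exact ih j hjk hj1 hji

/-- Let `S` be an ordered additive commutative monoid in which
`x ≤ x + y` holds for all `x, y`.  Suppose there are integers `m ≥ 2` and `n ≥ 1` such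
that `n • x ≤ m • y` implies `x ≤ y` for all `x, y ∈ S` ("(m,n)-comparison").  Then for
every `x ∈ S` and every integer `k ≥ 1`: if `k • x` is properly infinite
(`2 • (k • x) ≤ k • x`), then `x` is properly infinite (`2 • x ≤ x`). -/
theorem properlyInfinite_of_nsmul_properlyInfinite {S : Type*} [AddCommMonoid S] [PartialOrder S]
    [IsOrderedAddMonoid S]
    (hle : ∀ x y : S, x ≤ x + y)
    (m n : ℕ) (hm : 2 ≤ m) (hn : 1 ≤ n)
    (hcomp : ∀ x y : S, n • x ≤ m • y → x ≤ y)
    (x : S) (k : ℕ) (hk : 1 ≤ k)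
    (hki : 2 • (k • x) ≤ k • x) :
    2 • x ≤ x :=
  main_aux hle m n hm hn hcomp x k hk hki
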